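/- arXiv:1411.4025 — 4 statements merged into one kernel-verified Lean document; each statement's English description precedes it below -/
import Mathlib

section
/- Let P ∈ ℚ[X₁, …, X_n] be a polynomial of total degree at most d. Then the ℚ-linear map λ_P : ℚ[Λ] → ℚ determined by λ_P([v]) = P(v) for v ∈ Λ vanishes identically on I^{d+1}. Consequently λ_P induces a well-defined ℚ-linear map ℚ[Λ]/I^{d+1} → ℚ, i.e. λ_P extends continuously to the I-adic completion of ℚ[Λ]. -/
open MvPolynomial

namespace DSAux

variable {n : ℕ}

/-- The linear functional `λ_P` on the group algebra. -/
noncomputable def L (P : MvPolynomial (Fin n) ℚ) :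
    AddMonoidAlgebra ℚ (Fin n → ℤ) →ₗ[ℚ] ℚ :=
  Finsupp.linearCombination ℚ (fun v : Fin n → ℤ => MvPolynomial.eval (fun i => (v i : ℚ)) P)
    ∘ₗ (AddMonoidAlgebra.coeffLinearEquiv ℚ).toLinearMap

lemma L_apply (P : MvPolynomial (Fin n) ℚ) (x : AddMonoidAlgebra ℚ (Fin n → ℤ)) :
    L P x = ∑ v ∈ x.coeff.support, x.coeff v * MvPolynomial.eval (fun i => (v i : ℚ)) P := rfl

/-- Shift of a polynomial by an integer vector. -/
noncomputable def sh (w : Fin n → ℤ) (P : MvPolynomial (Fin n) ℚ) : MvPolynomial (Fin n) ℚ :=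
  aeval (fun i => X i + C (w i : ℚ)) P

lemma eval_sh (w v : Fin n → ℤ) (P : MvPolynomial (Fin n) ℚ) :
    eval (fun i => (v i : ℚ)) (sh w P) = eval (fun i => ((v i + w i : ℤ) : ℚ)) P := by
  have h := comp_aeval_apply (R := ℚ) (f := fun i : Fin n => X i + C ((w i : ℚ)))
      (aeval (R := ℚ) (fun i : Fin n => (v i : ℚ))) P
  simp only [aeval_X, map_add, aeval_C, Algebra.algebraMap_self, RingHom.id_apply] at h
  have h1 : ∀ (Q : MvPolynomial (Fin n) ℚ) (g : Fin n → ℚ), aeval g Q = eval g Q := by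
    intro Q g
    rw [aeval_def, Algebra.algebraMap_self, eval₂_id]
  rw [h1, h1] at h
  have hfun : (fun i => ((v i : ℚ)) + ((w i : ℚ))) = fun i => ((v i + w i : ℤ) : ℚ) := by
    funext i; push_cast; ring
  rw [sh, h, hfun]

lemma deg_pow_sub (i : Fin n) (c : ℚ) (k : ℕ) :
    ((X i + C c) ^ k - (X i : MvPolynomial (Fin n) ℚ) ^ k).totalDegree ≤ k - 1 := by
  rcases Nat.eq_zero_or_pos k with hk | hk
  · subst hk; simp
  rw [add_pow, Finset.sum_range_succ, Nat.sub_self, pow_zero, Nat.choose_self, Nat.cast_one,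
    mul_one, mul_one, add_sub_cancel_right]
  refine le_trans (totalDegree_finset_sum _ _) (Finset.sup_le fun m hm => ?_)
  have hm' : m ≤ k - 1 := Nat.le_sub_one_of_lt (Finset.mem_range.mp hm)
  calc (X i ^ m * C c ^ (k - m) * (k.choose m : MvPolynomial (Fin n) ℚ)).totalDegree
      ≤ (X i ^ m * C c ^ (k - m)).totalDegree
          + (k.choose m : MvPolynomial (Fin n) ℚ).totalDegree :=
        totalDegree_mul _ _
    _ ≤ ((X i ^ m).totalDegree + (C c ^ (k - m)).totalDegree)
          + (k.choose m : MvPolynomial (Fin n) ℚ).totalDegree :=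
        add_le_add_left (totalDegree_mul _ _) _
    _ ≤ (m * 1 + (k - m) * 0) + 0 := by
        refine add_le_add (add_le_add ?_ ?_) ?_
        · exact le_trans (totalDegree_pow _ _) (by rw [totalDegree_X])
        · exact le_trans (totalDegree_pow _ _) (by rw [totalDegree_C])
        · rw [← MvPolynomial.C_eq_coe_nat, totalDegree_C]
    _ ≤ k - 1 := by omega

lemma sum_single_add (i : Fin n) (k : ℕ) (s : Fin n →₀ ℕ) :
    ((Finsupp.single i k + s).sum fun _ m => m) = k + s.sum fun _ m => m := by
  rw [Finsupp.sum_add_index' (fun _ => rfl) (fun _ _ _ => rfl), Finsupp.sum_single_index rfl]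

lemma sh_mon_single_add (w : Fin n → ℤ) (i : Fin n) (k : ℕ) (s : Fin n →₀ ℕ) :
    sh w (monomial (Finsupp.single i k + s) (1 : ℚ))
      = (X i + C ((w i : ℚ))) ^ k * sh w (monomial s 1) := by
  rw [monomial_single_add]
  simp only [sh, map_mul, map_pow, aeval_X]

lemma deg_sh_mon (w : Fin n → ℤ) (s : Fin n →₀ ℕ) :
    (sh w (monomial s (1 : ℚ))).totalDegree ≤ s.sum fun _ k => k := by
  induction s using Finsupp.induction with
  | zero => simp [sh]
  | single_add i k s hi hk ih =>
    rw [sh_mon_single_add, sum_single_add]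
    refine le_trans (totalDegree_mul _ _) (add_le_add ?_ ih)
    refine le_trans (totalDegree_pow _ _) ?_
    have h1 : (X i + C ((w i : ℚ))).totalDegree ≤ 1 := by
      refine le_trans (totalDegree_add _ _) (max_le ?_ ?_)
      · rw [totalDegree_X]
      · rw [totalDegree_C]; omega
    calc k * (X i + C ((w i : ℚ))).totalDegree ≤ k * 1 := Nat.mul_le_mul_left k h1
      _ = k := Nat.mul_one k

lemma deg_sh_mon_sub (w : Fin n → ℤ) (s : Fin n →₀ ℕ) :
    sh w (monomial s (1 : ℚ)) - monomial s 1 = 0 ∨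
      (sh w (monomial s (1 : ℚ)) - monomial s 1).totalDegree < s.sum fun _ k => k := by
  induction s using Finsupp.induction with
  | zero => left; simp [sh]
  | single_add i k s hi hk ih =>
    right
    rw [sh_mon_single_add, sum_single_add, monomial_single_add]
    have hdecomp : (X i + C ((w i : ℚ))) ^ k * sh w (monomial s 1)
          - X i ^ k * monomial s 1
        = ((X i + C ((w i : ℚ))) ^ k - X i ^ k) * sh w (monomial s 1)
          + X i ^ k * (sh w (monomial s 1) - monomial s 1) := by
      ring
    rw [hdecomp]
    have h1 : ((((X i + C ((w i : ℚ))) ^ k - X i ^ k) * sh w (monomial s (1:ℚ)))).totalDegree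
        < k + s.sum fun _ m => m := by
      refine lt_of_le_of_lt (totalDegree_mul _ _) ?_
      have ha := deg_pow_sub i ((w i : ℚ)) k
      have hb := deg_sh_mon w s
      omega
    have h2 : (X i ^ k * (sh w (monomial s (1:ℚ)) - monomial s 1)).totalDegree
        < k + s.sum fun _ m => m := by
      rcases ih with h0 | hlt
      · rw [h0, mul_zero, totalDegree_zero]; omega
      · refine lt_of_le_of_lt (totalDegree_mul _ _) ?_
        have hx : (X i ^ k : MvPolynomial (Fin n) ℚ).totalDegree ≤ k := by
          refine le_trans (totalDegree_pow _ _) ?_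
          rw [totalDegree_X]; omega
        omega
    exact lt_of_le_of_lt (totalDegree_add _ _) (max_lt h1 h2)

lemma deg_sh_sub (w : Fin n → ℤ) (P : MvPolynomial (Fin n) ℚ) (e : ℕ)
    (hP : P.totalDegree ≤ e + 1) : (sh w P - P).totalDegree ≤ e := by
  have key : sh w P - P
      = ∑ s ∈ P.support, C (coeff s P) * (sh w (monomial s 1) - monomial s 1) := by
    conv_lhs => rw [P.as_sum]
    rw [sh, map_sum, ← Finset.sum_sub_distrib]
    refine Finset.sum_congr rfl fun s _ => ?_
    have hmon : (monomial s (coeff s P) : MvPolynomial (Fin n) ℚ)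
        = C (coeff s P) * monomial s 1 := by
      rw [C_mul_monomial, mul_one]
    rw [mul_sub, hmon, map_mul, aeval_C, MvPolynomial.algebraMap_apply,
      Algebra.algebraMap_self, RingHom.id_apply]
    rfl
  rw [key]
  refine le_trans (totalDegree_finset_sum _ _) (Finset.sup_le fun s hs => ?_)
  have hmem : (s.sum fun _ m => m) ≤ e + 1 := le_trans (le_totalDegree hs) hP
  refine le_trans (totalDegree_mul _ _) ?_
  rw [totalDegree_C, zero_add]
  rcases deg_sh_mon_sub w s with h0 | hlt
  · rw [h0, totalDegree_zero]; omega
  · omega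

lemma L_sub (P Q : MvPolynomial (Fin n) ℚ) (x : AddMonoidAlgebra ℚ (Fin n → ℤ)) :
    L (P - Q) x = L P x - L Q x := by
  rw [L_apply, L_apply, L_apply, ← Finset.sum_sub_distrib]
  refine Finset.sum_congr rfl fun v _ => ?_
  rw [map_sub, mul_sub]

lemma L_single (P : MvPolynomial (Fin n) ℚ) (u : Fin n → ℤ) (r : ℚ) :
    L P (AddMonoidAlgebra.single u r) = r * MvPolynomial.eval (fun i => (u i : ℚ)) P := by
  change Finsupp.linearCombination ℚ (fun v : Fin n → ℤ => MvPolynomial.eval (fun i => (v i : ℚ)) P)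
    (Finsupp.single u r) = _
  erw [Finsupp.linearCombination_single]
  rw [smul_eq_mul]

lemma L_single_mul (P : MvPolynomial (Fin n) ℚ) (w : Fin n → ℤ)
    (b : AddMonoidAlgebra ℚ (Fin n → ℤ)) :
    L P (AddMonoidAlgebra.single w 1 * b) = L (sh w P) b := by
  induction b using AddMonoidAlgebra.induction_linear with
  | zero => simp
  | add f g hf hg => rw [mul_add, map_add, map_add, hf, hg]
  | single u r =>
    rw [AddMonoidAlgebra.single_mul_single, one_mul, L_single, L_single, eval_sh]
    have hfun : (fun i => (((w + u) i : ℤ) : ℚ)) = (fun i => (((u i + w i : ℤ)) : ℚ)) := by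
      funext i
      push_cast [Pi.add_apply]
      ring
    rw [hfun]

lemma ker_le_span (a : AddMonoidAlgebra ℚ (Fin n → ℤ))
    (ha : (AddMonoidAlgebra.lift ℚ ℚ (Fin n → ℤ)) 1 a = 0) :
    a ∈ Submodule.span ℚ
      (Set.range fun w : Fin n → ℤ => (AddMonoidAlgebra.single w (1 : ℚ) - 1)) := by
  have hsum : ∑ w ∈ a.coeff.support, a.coeff w = 0 := by
    simpa [AddMonoidAlgebra.lift_apply, Finsupp.sum] using ha
  have h2 : a = ∑ w ∈ a.coeff.support, a.coeff w • (AddMonoidAlgebra.single w (1 : ℚ) - 1) := by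
    have e1 : ∑ w ∈ a.coeff.support, a.coeff w • AddMonoidAlgebra.single w (1 : ℚ) = a := by
      conv_rhs => rw [← AddMonoidAlgebra.sum_coeff_single a]
      rw [Finsupp.sum]
      refine Finset.sum_congr rfl fun w _ => ?_
      rw [AddMonoidAlgebra.smul_single, smul_eq_mul, mul_one]
    have e2 : ∑ w ∈ a.coeff.support, a.coeff w • (1 : AddMonoidAlgebra ℚ (Fin n → ℤ)) = 0 := by
      rw [← Finset.sum_smul, hsum, zero_smul]
    simp only [smul_sub, Finset.sum_sub_distrib, e1, e2, sub_zero]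
  rw [h2]
  exact Submodule.sum_mem _ fun w _ =>
    Submodule.smul_mem _ _ (Submodule.subset_span ⟨w, rfl⟩)

lemma main (d : ℕ) (P : MvPolynomial (Fin n) ℚ) (hP : P.totalDegree ≤ d)
    (x : AddMonoidAlgebra ℚ (Fin n → ℤ))
    (hx : x ∈ (RingHom.ker ((AddMonoidAlgebra.lift ℚ ℚ (Fin n → ℤ)) 1)) ^ (d + 1)) :
    L P x = 0 := by
  induction d generalizing P x with
  | zero =>
    rw [pow_one] at hx
    have hP0 : P = C (coeff 0 P) := by
      ext m
      rw [Nat.le_zero, totalDegree_eq_zero_iff] at hP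
      by_cases hm : m = 0
      · subst hm; simp
      · have hms : m ∉ P.support := fun hsupp => hm (Finsupp.ext fun i => hP m hsupp i)
        rw [notMem_support_iff] at hms
        rw [hms, coeff_C, if_neg (fun h => hm h.symm)]
    have hev : ∀ v : Fin n → ℤ, MvPolynomial.eval (fun i => (v i : ℚ)) P = coeff 0 P := by
      intro v
      conv_lhs => rw [hP0]
      rw [eval_C]
    have hval : L P x = (coeff 0 P) * ∑ v ∈ x.coeff.support, x.coeff v := by
      rw [L_apply, Finset.mul_sum]
      refine Finset.sum_congr rfl fun v _ => ?_
      rw [hev, mul_comm]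
    have hε : ∑ v ∈ x.coeff.support, x.coeff v = 0 := by
      have h0 := RingHom.mem_ker.mp hx
      simpa [AddMonoidAlgebra.lift_apply, Finsupp.sum] using h0
    rw [hval, hε, mul_zero]
  | succ d ih =>
    rw [pow_succ'] at hx
    refine Submodule.mul_induction_on hx ?_ ?_
    · intro a ha b hb
      have ha' := ker_le_span a (RingHom.mem_ker.mp ha)
      clear ha
      induction ha' using Submodule.span_induction with
      | mem y hy =>
        obtain ⟨w, rfl⟩ := hy
        rw [sub_mul, one_mul, map_sub, L_single_mul]
        have hLL : L (sh w P) b - L P b = L (sh w P - P) b := (L_sub _ _ _).symm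
        rw [hLL]
        exact ih (sh w P - P) (deg_sh_sub w P d hP) b hb
      | zero => simp
      | add y z _ _ hy hz => rw [add_mul, map_add, hy, hz, add_zero]
      | smul r y _ hy => rw [smul_mul_assoc, map_smul, hy, smul_zero]
    · intro y z hy hz
      rw [map_add, hy, hz, add_zero]

end DSAux

/-- Lemma `poleval` (a) of Dasgupta–Spieß: if `P ∈ ℚ[X₁, …, Xₙ]` has total
degree at most `d`, then the `ℚ`-linear map `λ_P : ℚ[ℤⁿ] → ℚ` determined by
`[v] ↦ P(v)` vanishes on the `(d+1)`-st power of the augmentation ideal `I`;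
hence it extends continuously to the `I`-adic completion of `ℚ[ℤⁿ]`. -/
theorem polynomial_eval_vanishes_on_pow_augmentation_ideal
    (n d : ℕ) (P : MvPolynomial (Fin n) ℚ) (hP : P.totalDegree ≤ d)
    (x : AddMonoidAlgebra ℚ (Fin n → ℤ))
    (hx : x ∈ (RingHom.ker ((AddMonoidAlgebra.lift ℚ ℚ (Fin n → ℤ)) 1)) ^ (d + 1)) :
    Finsupp.linearCombination ℚ
      (fun v : Fin n → ℤ => MvPolynomial.eval (fun i => (v i : ℚ)) P) x.coeff = 0 := by
  exact DSAux.main d P hP x hx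
end

section
/- Let ℓ be a prime number, ζ ∈ ℂ a primitive ℓ-th root of unity, and m an integer with 0 ≤ m ≤ ℓ − 2. If x ∈ ℚ satisfies (1 − ζ)^m · x ∈ ℤ[ζ], then x ∈ ℤ. Equivalently, (1 − ζ)^{−m}·ℤ[ζ] ∩ ℚ = ℤ for m ≤ ℓ − 2. -/
open Polynomial

/-- In `ℂ`, if `ζ` is a primitive `ℓ`-th root of unity with `ℓ` prime, then
`ℓ = (1 - ζ)^(ℓ-1) * u` for some `u ∈ ℤ[ζ]`. -/
lemma exists_unit_factor_of_primitiveRoot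
    (ℓ : ℕ) (hℓ : ℓ.Prime) (ζ : ℂ) (hζ : IsPrimitiveRoot ζ ℓ) :
    ∃ u ∈ Algebra.adjoin ℤ {ζ}, ((ℓ : ℂ)) = (1 - ζ) ^ (ℓ - 1) * u := by
  have : Fact ℓ.Prime := ⟨hℓ⟩
  have : NeZero ℓ := ⟨hℓ.ne_zero⟩
  have h1 : ((ℓ : ℂ)) = eval 1 (cyclotomic ℓ ℂ) := by
    rw [eval_one_cyclotomic_prime]
  rw [cyclotomic_eq_prod_X_sub_primitiveRoots hζ] at h1
  simp only [eval_prod, eval_sub, eval_X, eval_C] at h1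
  have hcard : (primitiveRoots ℓ ℂ).card = ℓ - 1 := by
    rw [hζ.card_primitiveRoots, Nat.totient_prime hℓ]
  have hstep : ∀ s : Finset ℂ, (∀ μ ∈ s, μ ∈ primitiveRoots ℓ ℂ) →
      ∃ u ∈ Algebra.adjoin ℤ {ζ}, ∏ μ ∈ s, (1 - μ) = (1 - ζ) ^ s.card * u := by
    intro s
    induction s using Finset.induction_on with
    | empty => intro _; exact ⟨1, Subalgebra.one_mem _, by simp⟩
    | insert _ _ hμs =>
      rename_i μ s ih
      intro hsub
      obtain ⟨u, hu, hprod⟩ := ih fun ν hν => hsub ν (Finset.mem_insert_of_mem hν)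
      have hμ : μ ∈ primitiveRoots ℓ ℂ := hsub μ (Finset.mem_insert_self μ s)
      have hμpow : μ ^ ℓ = 1 :=
        ((isPrimitiveRoot_of_mem_primitiveRoots hμ)).pow_eq_one
      obtain ⟨i, hi, rfl⟩ := hζ.eq_pow_of_pow_eq_one hμpow
      have hfac : 1 - ζ ^ i = (1 - ζ) * ∑ j ∈ Finset.range i, ζ ^ j := by
        have := geom_sum_mul ζ i
        linear_combination this
      refine ⟨(∑ j ∈ Finset.range i, ζ ^ j) * u, ?_, ?_⟩
      · exact Subalgebra.mul_mem _ (Subalgebra.sum_mem _ fun j _ =>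
          Subalgebra.pow_mem _ (Algebra.self_mem_adjoin_singleton ℤ ζ) j) hu
      · rw [Finset.prod_insert hμs, hprod, Finset.card_insert_of_notMem hμs, hfac]
        ring
  obtain ⟨u, hu, hprod⟩ := hstep _ (fun μ hμ => hμ)
  exact ⟨u, hu, by rw [h1, hprod, hcard]⟩

/-- if `ζ` is a primitive `ℓ`-th root of unity (`ℓ` prime), `0 ≤ m ≤ ℓ - 2`,
and `x ∈ ℚ` satisfies `(1 - ζ)^m · x ∈ ℤ[ζ]`, then `x ∈ ℤ`;
equivalently `(1 - ζ)^{-m} ℤ[ζ] ∩ ℚ = ℤ` for `m ≤ ℓ - 2`. -/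
theorem rat_int_of_one_sub_primitiveRoot_pow_mul_mem_adjoin
    (ℓ : ℕ) (hℓ : ℓ.Prime) (ζ : ℂ) (hζ : IsPrimitiveRoot ζ ℓ)
    (m : ℕ) (hm : m ≤ ℓ - 2) (x : ℚ)
    (hx : (1 - ζ) ^ m * (x : ℂ) ∈ Algebra.adjoin ℤ {ζ}) :
    ∃ a : ℤ, x = (a : ℚ) := by
  obtain ⟨u, hu, hℓeq⟩ := exists_unit_factor_of_primitiveRoot ℓ hℓ ζ hζ
  set n : ℕ := ℓ - 1 with hn
  have hn1 : 1 ≤ n := by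
    have := hℓ.two_le
    omega
  -- the rational number ℓ^m * x^n
  set z : ℚ := (ℓ : ℚ) ^ m * x ^ n with hz
  -- its image in ℂ lies in ℤ[ζ]
  have hzmem : ((z : ℚ) : ℂ) ∈ Algebra.adjoin ℤ {ζ} := by
    have key : ((z : ℚ) : ℂ) = ((1 - ζ) ^ m * (x : ℂ)) ^ n * u ^ m := by
      push_cast [hz]
      rw [hℓeq]
      ring
    rw [key]
    exact Subalgebra.mul_mem _ (Subalgebra.pow_mem _ hx n) (Subalgebra.pow_mem _ hu m)
  -- hence z is an integer
  have hζint : IsIntegral ℤ ζ := by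
    refine ⟨X ^ ℓ - C 1, monic_X_pow_sub_C 1 hℓ.ne_zero, ?_⟩
    simp [eval₂_sub, eval₂_pow, hζ.pow_eq_one]
  have hint : IsIntegral ℤ ((z : ℚ) : ℂ) := by
    have := Algebra.IsIntegral.adjoin (R := ℤ) (A := ℂ) (S := {ζ})
      (by rintro y rfl; exact hζint)
    exact IsIntegral.of_mem_of_fg _ (IsIntegral.fg_adjoin_singleton hζint) _ hzmem
  have hintz : IsIntegral ℤ z := by
    have halg : algebraMap ℚ ℂ z = ((z : ℚ) : ℂ) := by
      simp [eq_ratCast]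
    rw [← isIntegral_algebraMap_iff (algebraMap ℚ ℂ).injective, halg]
    exact hint
  obtain ⟨b, hb⟩ := IsIntegrallyClosed.isIntegral_iff.mp hintz
  -- hb : algebraMap ℤ ℚ b = z
  have hb' : (b : ℚ) = (ℓ : ℚ) ^ m * x ^ n := by
    rw [← hz]; exact_mod_cast hb
  -- clear denominators
  have hdeneq : (ℓ : ℤ) ^ m * x.num ^ n = b * (x.den : ℤ) ^ n := by
    have hden : (x.den : ℚ) ≠ 0 := by exact_mod_cast x.den_ne_zero
    have hxq : (x.num : ℚ) = x * (x.den : ℚ) := by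
      rw [Rat.mul_den_eq_num]
    have : ((ℓ : ℤ) ^ m * x.num ^ n : ℚ) = (b * (x.den : ℤ) ^ n : ℚ) := by
      push_cast
      rw [hxq, hb']
      ring
    exact_mod_cast this
  -- denominator divides ℓ^m
  have hdvd : (x.den : ℕ) ^ n ∣ ℓ ^ m := by
    have h1 : ((x.den : ℤ)) ^ n ∣ (ℓ : ℤ) ^ m * x.num ^ n :=
      ⟨b, by linarith [hdeneq]⟩
    have h2 : (x.den : ℕ) ^ n ∣ ℓ ^ m * x.num.natAbs ^ n := by
      have := Int.natAbs_dvd_natAbs.mpr h1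
      simpa [Int.natAbs_mul, Int.natAbs_pow] using this
    have hcop : Nat.Coprime ((x.den : ℕ) ^ n) (x.num.natAbs ^ n) :=
      x.reduced.symm.pow n n
    exact hcop.dvd_of_dvd_mul_right h2
  -- conclude x.den = 1
  have hden1 : x.den = 1 := by
    by_contra hne
    have hpd : x.den.minFac.Prime := Nat.minFac_prime hne
    have h1 : x.den.minFac ^ n ∣ ℓ ^ m :=
      dvd_trans (pow_dvd_pow_of_dvd (Nat.minFac_dvd _) n) hdvd
    have h2 : x.den.minFac ∣ ℓ := by
      have : x.den.minFac ∣ ℓ ^ m := dvd_trans (dvd_pow_self _ (by omega)) h1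
      exact hpd.dvd_of_dvd_pow this
    have h3 : x.den.minFac = ℓ := (Nat.prime_dvd_prime_iff_eq hpd hℓ).mp h2
    rw [h3] at h1
    have h4 : n ≤ m := (Nat.pow_dvd_pow_iff_le_right hℓ.one_lt).mp h1
    omega
  exact ⟨x.num, by rw [← Rat.num_div_den x, hden1]; simp⟩
end

section
/- Let R be a commutative ring, w₁, …, w_m ∈ ℤⁿ linearly independent over ℚ, N a positive integer, u₁, …, u_m ∈ R, and h : ℤⁿ → R a function satisfying h(x + wᵢ) = uᵢ·h(x) for all x ∈ ℤⁿ and all i. Then in the group algebra R[ℤⁿ] one has the identity Σ_{x ∈ ℤⁿ ∩ P(N·w₁, …, N·w_m)} h(x)·[x] = (Σ_{x ∈ ℤⁿ ∩ P(w₁, …, w_m)} h(x)·[x]) · ∏_{i=1}^{m} (Σ_{j=0}^{N−1} uᵢ^j·[j·wᵢ]), both sums being finite. -/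
/-- The set of lattice points of the half-open parallelepiped spanned by the
(real images of the) integer vectors `w₁, …, w_m`. -/
def latticePointsOfParallelepiped {n m : ℕ} (w : Fin m → (Fin n → ℤ)) : Set (Fin n → ℤ) :=
  {x | ∃ t : Fin m → ℝ, (∀ i, 0 < t i ∧ t i ≤ 1) ∧
    ∀ j, (x j : ℝ) = ∑ i, t i * (w i j : ℝ)}

open Finset

/-- Uniqueness of real coefficients for ℚ-linearly independent integer vectors. -/
lemma realCoeff_eq_zero {n m : ℕ} (w : Fin m → (Fin n → ℤ))
    (hw : LinearIndependent ℚ fun i => fun j => ((w i j : ℚ)))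
    (c : Fin m → ℝ) (hc : ∀ j, ∑ i, c i * (w i j : ℝ) = 0) : c = 0 := by
  classical
  set G : Matrix (Fin m) (Fin m) ℚ := Matrix.of fun i k => ∑ j, (w i j : ℚ) * (w k j : ℚ) with hG
  have hdet : G.det ≠ 0 := by
    intro hd
    obtain ⟨v, hv0, hv⟩ := (Matrix.exists_mulVec_eq_zero_iff).2 hd
    have key : ∀ j, ∑ i, v i * (w i j : ℚ) = 0 := by
      have h2 : ∑ j, (∑ i, v i * (w i j : ℚ)) ^ 2 = 0 := by
        have hGv : ∑ i, v i * (G.mulVec v) i = 0 := by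
          simp [hv]
        rw [← hGv]
        simp only [Matrix.mulVec, dotProduct, hG, Matrix.of_apply, sq,
          Finset.mul_sum, Finset.sum_mul]
        rw [Finset.sum_comm]
        refine Finset.sum_congr rfl fun i _ => ?_
        rw [Finset.sum_comm]
        refine Finset.sum_congr rfl fun k _ => Finset.sum_congr rfl fun j _ => ?_
        ring
      intro j
      have := (Finset.sum_eq_zero_iff_of_nonneg (fun j _ => sq_nonneg _)).1 h2 j (mem_univ j)
      exact pow_eq_zero_iff (by norm_num) |>.1 this
    have := Fintype.linearIndependent_iff.1 hw v (by
      funext j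
      simpa [smul_eq_mul] using key j)
    exact hv0 (funext this)
  by_contra hc0
  have hdR : (G.map (Rat.cast : ℚ → ℝ)).det ≠ 0 := by
    have : G.map (Rat.cast : ℚ → ℝ) = (algebraMap ℚ ℝ).mapMatrix G := rfl
    rw [this, ← RingHom.map_det (algebraMap ℚ ℝ) G]
    simpa using hdet
  refine hdR ((Matrix.exists_mulVec_eq_zero_iff).1 ⟨c, hc0, ?_⟩)
  funext i
  simp only [Matrix.mulVec, dotProduct, Matrix.map_apply, hG, Matrix.of_apply,
    Pi.zero_apply]
  push_cast
  calc ∑ k, (∑ j, (w i j : ℝ) * (w k j : ℝ)) * c k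
      = ∑ j, (w i j : ℝ) * ∑ k, c k * (w k j : ℝ) := by
        simp only [Finset.sum_mul, Finset.mul_sum]
        rw [Finset.sum_comm]
        exact Finset.sum_congr rfl fun j _ => Finset.sum_congr rfl fun k _ => by ring
    _ = 0 := by simp [hc]

lemma latticePoints_finite {n m : ℕ} (w : Fin m → (Fin n → ℤ)) :
    (latticePointsOfParallelepiped w).Finite := by
  classical
  set B : Fin n → ℤ := fun j => ∑ i, |w i j| with hB
  have : latticePointsOfParallelepiped w ⊆ Set.pi Set.univ fun j => Set.Icc (-B j) (B j) := by
    rintro x ⟨t, ht, hx⟩ j _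
    have habs : |(x j : ℝ)| ≤ (B j : ℝ) := by
      rw [hx j]
      calc |∑ i, t i * (w i j : ℝ)| ≤ ∑ i, |t i * (w i j : ℝ)| := Finset.abs_sum_le_sum_abs _ _
        _ ≤ ∑ i, |(w i j : ℝ)| := by
            refine Finset.sum_le_sum fun i _ => ?_
            rw [abs_mul]
            have h1 : |t i| ≤ 1 := abs_le.2 ⟨by linarith [(ht i).1], (ht i).2⟩
            nlinarith [abs_nonneg ((w i j : ℝ))]
        _ = (B j : ℝ) := by push_cast [hB]; rfl
    have : |x j| ≤ B j := by
      have : ((|x j| : ℤ) : ℝ) ≤ ((B j : ℤ) : ℝ) := by rw [Int.cast_abs]; exact habs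
      exact_mod_cast this
    exact abs_le.1 this
  exact Set.Finite.subset (Set.Finite.pi fun j => Set.finite_Icc _ _) this

/-- for a commutative ring `R`, `ℚ`-linearly independent `w₁, …, w_m ∈ ℤⁿ`,
`N ≥ 1`, `u₁, …, u_m ∈ R` and `h : ℤⁿ → R` with `h(x + wᵢ) = uᵢ·h(x)`, one has in `R[ℤⁿ]`:
`∑_{x ∈ ℤⁿ ∩ P(Nw₁, …, Nw_m)} h(x)[x]
  = (∑_{x ∈ ℤⁿ ∩ P(w₁, …, w_m)} h(x)[x]) · ∏ᵢ (∑_{j=0}^{N-1} uᵢʲ·[j·wᵢ])`. -/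
theorem sum_lattice_points_smul_parallelepiped_eq_mul_geometric
    (R : Type*) [CommRing R] {n m : ℕ} (w : Fin m → (Fin n → ℤ))
    (hw : LinearIndependent ℚ fun i => fun j => ((w i j : ℚ)))
    (N : ℕ) (hN : 1 ≤ N) (u : Fin m → R) (h : (Fin n → ℤ) → R)
    (hh : ∀ x : Fin n → ℤ, ∀ i, h (x + w i) = u i * h x) :
    (∑ᶠ x ∈ latticePointsOfParallelepiped (fun i => N • w i),
        AddMonoidAlgebra.single x (h x))
      = (∑ᶠ x ∈ latticePointsOfParallelepiped w, AddMonoidAlgebra.single x (h x))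
        * ∏ i : Fin m, ∑ j ∈ Finset.range N,
            AddMonoidAlgebra.single (j • w i) (u i ^ j) := by
  classical
  have hNpos : (0:ℝ) < N := by exact_mod_cast Nat.lt_of_lt_of_le Nat.zero_lt_one hN
  set T : Finset (Fin m → ℕ) := Fintype.piFinset fun _ => Finset.range N with hT
  -- h of a shifted point
  have hstep : ∀ (x : Fin n → ℤ) (k : ℕ) (i : Fin m), h (x + k • w i) = u i ^ k * h x := by
    intro x k i
    induction k with
    | zero => simp
    | succ k ih =>
      have hx : x + (k + 1) • w i = (x + k • w i) + w i := by
        rw [succ_nsmul]; abel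
      rw [hx, hh, ih]; ring
  have hprod : ∀ (x : Fin n → ℤ) (g : Fin m → ℕ),
      h (x + ∑ i, g i • w i) = (∏ i, u i ^ g i) * h x := by
    intro x g
    have : ∀ s : Finset (Fin m),
        h (x + ∑ i ∈ s, g i • w i) = (∏ i ∈ s, u i ^ g i) * h x := by
      intro s
      induction s using Finset.induction_on with
      | empty => simp
      | @insert a s ha ih =>
        rw [Finset.sum_insert ha, Finset.prod_insert ha,
          show x + (g a • w a + ∑ i ∈ s, g i • w i) = (x + ∑ i ∈ s, g i • w i) + g a • w a by
            abel,
          hstep, ih]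
        ring
    exact this univ
  -- coordinate computations
  have coordσ : ∀ (g : Fin m → ℕ) (j : Fin n),
      (((∑ i, g i • w i) j : ℤ) : ℝ) = ∑ i, (g i : ℝ) * (w i j : ℝ) := by
    intro g j
    rw [Finset.sum_apply]
    push_cast [Pi.smul_apply, nsmul_eq_mul]
    rfl
  have coordN : ∀ (i : Fin m) (j : Fin n),
      (((N • w i) j : ℤ) : ℝ) = (N : ℝ) * (w i j : ℝ) := by
    intro i j
    rw [Pi.smul_apply]
    push_cast [nsmul_eq_mul]
    ring
  -- forward membership
  have hmem : ∀ x ∈ latticePointsOfParallelepiped w, ∀ g ∈ T,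
      x + ∑ i, g i • w i ∈ latticePointsOfParallelepiped (fun i => N • w i) := by
    rintro x ⟨t, ht, hx⟩ g hg
    have hgN : ∀ i, (g i : ℝ) ≤ (N : ℝ) - 1 := by
      intro i
      have : g i < N := by
        have := Fintype.mem_piFinset.1 hg i
        simpa using this
      have : (g i : ℝ) + 1 ≤ N := by exact_mod_cast this
      linarith
    refine ⟨fun i => (t i + g i) / N, fun i => ⟨?_, ?_⟩, fun j => ?_⟩
    · have : (0:ℝ) ≤ g i := Nat.cast_nonneg _
      have := (ht i).1
      positivity
    · rw [div_le_one hNpos]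
      have := (ht i).2
      linarith [hgN i]
    · have hc : ((x + ∑ i, g i • w i) j : ℝ) = (x j : ℝ) + ∑ i, (g i : ℝ) * (w i j : ℝ) := by
        rw [Pi.add_apply]
        push_cast
        rw [coordσ]
      rw [hc, hx j, ← Finset.sum_add_distrib]
      refine Finset.sum_congr rfl fun i _ => ?_
      rw [coordN]
      field_simp
  -- surjectivity
  have hsurj : ∀ y ∈ latticePointsOfParallelepiped (fun i => N • w i),
      ∃ x ∈ latticePointsOfParallelepiped w, ∃ g ∈ T, x + ∑ i, g i • w i = y := by
    rintro y ⟨t', ht', hy⟩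
    set s : Fin m → ℝ := fun i => N * t' i with hs
    have hs0 : ∀ i, 0 < s i := fun i => mul_pos hNpos (ht' i).1
    have hsN : ∀ i, s i ≤ N := by
      intro i
      have h1 := (ht' i).2
      calc (N:ℝ) * t' i ≤ N * 1 := by nlinarith
        _ = N := mul_one _
    set g : Fin m → ℕ := fun i => ⌈s i⌉₊ - 1 with hgdef
    have hceil1 : ∀ i, 1 ≤ ⌈s i⌉₊ := fun i => Nat.ceil_pos.2 (hs0 i)
    have hgcast : ∀ i, (g i : ℝ) = (⌈s i⌉₊ : ℝ) - 1 := by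
      intro i
      rw [hgdef]
      push_cast [Nat.cast_sub (hceil1 i)]
      ring
    have hgT : g ∈ T := by
      rw [hT, Fintype.mem_piFinset]
      intro i
      rw [Finset.mem_range]
      have h1 : ⌈s i⌉₊ ≤ N := Nat.ceil_le.2 (hsN i)
      have h2 := hceil1 i
      simp only [hgdef]
      omega
    refine ⟨y - ∑ i, g i • w i, ⟨fun i => s i - g i, fun i => ⟨?_, ?_⟩, fun j => ?_⟩,
      g, hgT, by abel⟩
    · have := Nat.ceil_lt_add_one (hs0 i).le
      show 0 < s i - (g i : ℝ)
      rw [hgcast i]; linarith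
    · have := Nat.le_ceil (s i)
      show s i - (g i : ℝ) ≤ 1
      rw [hgcast i]; linarith
    · have h1 : (((y - ∑ i, g i • w i) j : ℤ) : ℝ)
          = (y j : ℝ) - ∑ i, (g i : ℝ) * (w i j : ℝ) := by
        rw [Pi.sub_apply]
        push_cast
        rw [coordσ]
      rw [h1, hy j, ← Finset.sum_sub_distrib]
      refine Finset.sum_congr rfl fun i _ => ?_
      rw [coordN]
      simp only [hs]
      ring
  -- injectivity
  have hinj : ∀ x ∈ latticePointsOfParallelepiped w, ∀ g ∈ T,
      ∀ x' ∈ latticePointsOfParallelepiped w, ∀ g' ∈ T,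
      x + ∑ i, g i • w i = x' + ∑ i, g' i • w i → x = x' ∧ g = g' := by
    rintro x ⟨t, ht, hx⟩ g hg x' ⟨t', ht', hx'⟩ g' hg' heq
    have key : ∀ j, ∑ i, ((t i + g i) - (t' i + g' i)) * (w i j : ℝ) = 0 := by
      intro j
      have h0 := congrFun heq j
      have hcast : (x j : ℝ) + ∑ i, (g i : ℝ) * (w i j : ℝ)
          = (x' j : ℝ) + ∑ i, (g' i : ℝ) * (w i j : ℝ) := by
        have h1 : (((x + ∑ i, g i • w i) j : ℤ) : ℝ)
            = (((x' + ∑ i, g' i • w i) j : ℤ) : ℝ) := by rw [h0]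
        rw [Pi.add_apply, Pi.add_apply] at h1
        push_cast at h1
        rw [coordσ, coordσ] at h1
        exact h1
      rw [hx j, hx' j] at hcast
      simp only [sub_mul, add_mul, Finset.sum_sub_distrib, Finset.sum_add_distrib]
      linarith [hcast]
    have hz := realCoeff_eq_zero w hw _ key
    have heqc : ∀ i, t i + (g i : ℝ) = t' i + (g' i : ℝ) := by
      intro i
      have := congrFun hz i
      simp only [Pi.zero_apply, sub_eq_zero] at this
      exact this
    have hgg : g = g' := by
      funext i
      have habs : |((g i : ℤ) - (g' i : ℤ) : ℤ)| < 1 := by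
        have h1 : (((g i : ℤ) - (g' i : ℤ) : ℤ) : ℝ) = t' i - t i := by
          push_cast
          linarith [heqc i]
        have h2 : |(((g i : ℤ) - (g' i : ℤ) : ℤ) : ℝ)| < 1 := by
          rw [h1]
          rw [abs_lt]
          constructor <;> linarith [(ht i).1, (ht i).2, (ht' i).1, (ht' i).2]
        exact_mod_cast (by rwa [← Int.cast_abs] at h2 : ((|(g i : ℤ) - (g' i : ℤ)| : ℤ) : ℝ) < 1)
      have := Int.abs_lt_one_iff.1 habs
      have : (g i : ℤ) = (g' i : ℤ) := sub_eq_zero.1 this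
      exact_mod_cast this
    refine ⟨?_, hgg⟩
    rw [hgg] at heq
    exact add_right_cancel heq
  -- now the sums
  have hPf := latticePoints_finite w
  have hQf := latticePoints_finite (fun i => N • w i)
  rw [finsum_mem_eq_finite_toFinset_sum _ hQf, finsum_mem_eq_finite_toFinset_sum _ hPf]
  rw [Finset.prod_univ_sum]
  have hps : ∀ g : Fin m → ℕ,
      (∏ i, AddMonoidAlgebra.single (g i • w i) (u i ^ g i) :
        AddMonoidAlgebra R (Fin n → ℤ))
      = AddMonoidAlgebra.single (∑ i, g i • w i) (∏ i, u i ^ g i) := fun g =>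
    AddMonoidAlgebra.prod_single _ _ _
  simp_rw [hps]
  rw [Finset.sum_mul_sum]
  simp_rw [AddMonoidAlgebra.single_mul_single]
  rw [← Finset.sum_product']
  refine (Finset.sum_bij (fun p _ => p.1 + ∑ i, p.2 i • w i) ?_ ?_ ?_ ?_).symm
  · rintro ⟨x, g⟩ hp
    rw [Finset.mem_product] at hp
    rw [Set.Finite.mem_toFinset]
    exact hmem x (hPf.mem_toFinset.1 hp.1) g hp.2
  · rintro ⟨x, g⟩ hp ⟨x', g'⟩ hp' heq
    rw [Finset.mem_product] at hp hp'
    obtain ⟨h1, h2⟩ := hinj x (hPf.mem_toFinset.1 hp.1) g hp.2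
      x' (hPf.mem_toFinset.1 hp'.1) g' hp'.2 heq
    exact Prod.ext h1 h2
  · intro y hy
    obtain ⟨x, hxP, g, hgT', hxy⟩ := hsurj y (hQf.mem_toFinset.1 hy)
    exact ⟨⟨x, g⟩, Finset.mem_product.2 ⟨hPf.mem_toFinset.2 hxP, hgT'⟩, hxy⟩
  · rintro ⟨x, g⟩ hp
    rw [hprod x g, mul_comm]
end

section
/- Let P ∈ ℚ[X₁, …, X_n] be a polynomial of total degree at most d that takes integer values on ℤⁿ (P(v) ∈ ℤ for all v ∈ ℤⁿ). Then the ℤ-linear map λ_P : ℤ[ℤⁿ] → ℤ determined by λ_P([v]) = P(v) for v ∈ ℤⁿ vanishes identically on I^{d+1}, and hence induces a well-defined ℤ-linear map ℤ[ℤⁿ]/I^{d+1} → ℤ (equivalently, λ_P extends continuously to the augmentation-adic completion ℤ[[ℤⁿ]] with values in ℤ). -/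
open MvPolynomial Finsupp

namespace Aux17

variable {n : ℕ}

noncomputable def T (v : Fin n → ℤ) : MvPolynomial (Fin n) ℚ →ₐ[ℚ] MvPolynomial (Fin n) ℚ :=
  aeval (fun i => X i + C (v i : ℚ))

lemma deg_T_X_pow (v : Fin n → ℤ) (i : Fin n) (k : ℕ) :
    ((T v) (X i ^ k)).totalDegree ≤ k := by
  rw [map_pow]
  refine (totalDegree_pow _ _).trans ?_
  have hx : (T v) (X i) = X i + C ((v i : ℚ)) := aeval_X _ i
  have h1 : ((T v) (X i)).totalDegree ≤ 1 := by
    rw [hx]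
    refine (totalDegree_add _ _).trans (max_le ?_ ?_)
    · rw [totalDegree_X]
    · rw [totalDegree_C]; omega
  calc k * ((T v) (X i)).totalDegree ≤ k * 1 := Nat.mul_le_mul_left _ h1
    _ = k := mul_one k

lemma deg_D_X_pow (v : Fin n → ℤ) (i : Fin n) (k : ℕ) :
    ((T v) (X i ^ k) - X i ^ k).totalDegree ≤ k - 1 := by
  have : (T v) (X i ^ k) = ∑ m ∈ Finset.range (k + 1),
      X i ^ m * C ((v i : ℚ)) ^ (k - m) * (Nat.choose k m : MvPolynomial (Fin n) ℚ) := by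
    rw [map_pow]
    simp only [T, aeval_X]
    exact add_pow _ _ _
  rw [this, Finset.sum_range_succ]
  simp only [Nat.sub_self, pow_zero, mul_one, Nat.choose_self, Nat.cast_one, add_sub_cancel_right]
  refine (totalDegree_finset_sum _ _).trans (Finset.sup_le fun m hm => ?_)
  have hm' : m ≤ k - 1 := by have := Finset.mem_range.mp hm; omega
  refine le_trans (totalDegree_mul _ _) ?_
  refine le_trans (add_le_add (totalDegree_mul _ _) le_rfl) ?_
  have h1 : (X i ^ m : MvPolynomial (Fin n) ℚ).totalDegree ≤ m := by
    refine (totalDegree_pow _ _).trans ?_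
    simp [totalDegree_X]
  have h2 : ((C ((v i : ℚ)) ^ (k - m) : MvPolynomial (Fin n) ℚ)).totalDegree = 0 := by
    rw [← C_pow]; exact totalDegree_C _
  have h3 : ((Nat.choose k m : MvPolynomial (Fin n) ℚ)).totalDegree = 0 := by
    rw [← C_eq_coe_nat]; exact totalDegree_C _
  omega

lemma deg_D_monomial (v : Fin n → ℤ) (s : Fin n →₀ ℕ) (c : ℚ) :
    (T v) (monomial s c) - monomial s c = 0 ∨
    ((T v) (monomial s c) - monomial s c).totalDegree + 1 ≤ s.sum fun _ m => m := by
  induction s using Finsupp.induction with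
  | zero =>
    left
    rw [monomial_zero', sub_eq_zero, T, aeval_C, algebraMap_eq]
  | single_add i k t hit hk ih =>
    right
    have hsum : ((Finsupp.single i k + t).sum fun _ m => m) = k + t.sum fun _ m => m := by
      rw [Finsupp.sum_add_index' (fun _ => rfl) (fun _ _ _ => rfl),
        Finsupp.sum_single_index rfl]
    rw [hsum]
    have hmono : (monomial (Finsupp.single i k + t) c : MvPolynomial (Fin n) ℚ)
        = X i ^ k * monomial t c := by
      rw [X_pow_eq_monomial, monomial_mul, one_mul]
    rw [hmono]
    have hq : ((monomial t c : MvPolynomial (Fin n) ℚ)).totalDegree ≤ t.sum fun _ m => m :=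
      totalDegree_monomial_le _ _
    have hdq := deg_D_X_pow v i k
    have hTp := deg_T_X_pow v i k
    rcases ih with h0 | hle
    · have : (T v) (X i ^ k * monomial t c) - X i ^ k * monomial t c
          = ((T v) (X i ^ k) - X i ^ k) * monomial t c := by
        rw [sub_eq_zero] at h0
        rw [map_mul, h0]
        ring
      rw [this]
      have := totalDegree_mul ((T v) (X i ^ k) - X i ^ k) (monomial t c)
      omega
    · have key : (T v) (X i ^ k * monomial t c) - X i ^ k * monomial t c
          = (T v) (X i ^ k) * ((T v) (monomial t c) - monomial t c)
            + ((T v) (X i ^ k) - X i ^ k) * monomial t c := by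
        rw [map_mul]; ring
      rw [key]
      refine le_trans (add_le_add_left (totalDegree_add _ _) 1) ?_
      have t1 := totalDegree_mul ((T v) (X i ^ k)) ((T v) (monomial t c) - monomial t c)
      have t2 := totalDegree_mul ((T v) (X i ^ k) - X i ^ k) (monomial t c)
      have hmax : max ((T v) (X i ^ k) * ((T v) (monomial t c) - monomial t c)).totalDegree
          ((((T v) (X i ^ k) - X i ^ k) * monomial t c)).totalDegree
          ≤ k + (t.sum fun _ m => m) - 1 := max_le (by omega) (by omega)
      omega

lemma deg_D (v : Fin n → ℤ) (Q : MvPolynomial (Fin n) ℚ) (e : ℕ) (hQ : Q.totalDegree ≤ e + 1) :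
    ((T v) Q - Q).totalDegree ≤ e := by
  have hrw : (T v) Q - Q
      = ∑ s ∈ Q.support, ((T v) (monomial s (Q.coeff s)) - monomial s (Q.coeff s)) := by
    rw [Finset.sum_sub_distrib, ← map_sum, ← as_sum]
  rw [hrw]
  refine (totalDegree_finset_sum _ _).trans (Finset.sup_le fun s hs => ?_)
  have hsd : (s.sum fun _ m => m) ≤ Q.totalDegree := le_totalDegree hs
  rcases deg_D_monomial v s (Q.coeff s) with h0 | hle
  · rw [h0]; simp
  · omega


noncomputable def L (Q : MvPolynomial (Fin n) ℚ) :
    ((Fin n → ℤ) →₀ ℤ) →ₗ[ℤ] ℚ :=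
  Finsupp.linearCombination ℤ (fun v => eval (fun i => (v i : ℚ)) Q)

lemma aeval_eq_eval' (f : Fin n → ℚ) (p : MvPolynomial (Fin n) ℚ) :
    aeval f p = eval f p := by
  rw [aeval_def, eval, coe_eval₂Hom]
  rfl

lemma eval_T (v w : Fin n → ℤ) (Q : MvPolynomial (Fin n) ℚ) :
    eval (fun i => (w i : ℚ)) ((T v) Q) = eval (fun i => ((v + w) i : ℚ)) Q := by
  rw [← aeval_eq_eval', ← aeval_eq_eval', T]
  have h := congrArg (fun (φ : MvPolynomial (Fin n) ℚ →ₐ[ℚ] ℚ) => φ Q)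
    (comp_aeval (f := fun i => X i + C ((v i : ℚ)))
      (φ := aeval (R := ℚ) (fun i => ((w i : ℚ)))))
  simp only [AlgHom.coe_comp, Function.comp_apply] at h
  rw [h]
  have hfun : (fun i => (aeval (R := ℚ) fun i => ((w i : ℚ))) (X i + C ((v i : ℚ))))
      = fun i => (((v + w) i : ℚ)) := by
    funext i
    simp [add_comm]
  rw [hfun]

lemma L_sub (Q₁ Q₂ : MvPolynomial (Fin n) ℚ) (y : AddMonoidAlgebra ℤ (Fin n → ℤ)) :
    L (Q₁ - Q₂) y.coeff = L Q₁ y.coeff - L Q₂ y.coeff := by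
  rw [L, L, L, Finsupp.linearCombination_apply, Finsupp.linearCombination_apply,
    Finsupp.linearCombination_apply, Finsupp.sum, Finsupp.sum, Finsupp.sum,
    ← Finset.sum_sub_distrib]
  exact Finset.sum_congr rfl fun v _ => by rw [map_sub, smul_sub]

lemma L_shift (Q : MvPolynomial (Fin n) ℚ) (v : Fin n → ℤ)
    (y : AddMonoidAlgebra ℤ (Fin n → ℤ)) :
    L Q (AddMonoidAlgebra.single v (1 : ℤ) * y).coeff = L ((T v) Q) y.coeff := by
  induction y using AddMonoidAlgebra.induction with
  | zero =>
    rw [mul_zero, AddMonoidAlgebra.coeff_zero, map_zero, map_zero]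
  | single_add w c y hw hc ih =>
    have hmul : AddMonoidAlgebra.single v 1
          * (AddMonoidAlgebra.single w c
            + (show AddMonoidAlgebra ℤ (Fin n → ℤ) from y))
        = AddMonoidAlgebra.single (v + w) c
          + AddMonoidAlgebra.single v 1 * (show AddMonoidAlgebra ℤ (Fin n → ℤ) from y) := by
      rw [mul_add]
      congr 1
      exact (AddMonoidAlgebra.single_mul_single _ _ _ _).trans (by rw [one_mul])
    rw [hmul, AddMonoidAlgebra.coeff_add, AddMonoidAlgebra.coeff_add, map_add, map_add, ih]
    congr 1
    rw [L, L, AddMonoidAlgebra.coeff_single, AddMonoidAlgebra.coeff_single, Finsupp.linearCombination_single, Finsupp.linearCombination_single, eval_T]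

lemma eps_apply (a : AddMonoidAlgebra ℤ (Fin n → ℤ)) :
    (AddMonoidAlgebra.lift ℤ ℤ (Fin n → ℤ)) 1 a = a.coeff.sum fun _ c => c := by
  rw [AddMonoidAlgebra.lift_apply]
  simp

lemma main (d : ℕ) (Q : MvPolynomial (Fin n) ℚ) (hQ : Q.totalDegree ≤ d)
    (x : AddMonoidAlgebra ℤ (Fin n → ℤ))
    (hx : x ∈ (RingHom.ker ((AddMonoidAlgebra.lift ℤ ℤ (Fin n → ℤ)) 1)) ^ (d + 1)) :
    L Q x.coeff = 0 := by
  induction d generalizing Q x with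
  | zero =>
    rw [pow_one, RingHom.mem_ker, eps_apply] at hx
    have hQ0 : Q.totalDegree = 0 := Nat.le_zero.mp hQ
    have hev : ∀ f : Fin n → ℚ, eval f Q = Q.coeff 0 := by
      intro f
      have hQC : Q = C (Q.coeff 0) := by
        ext m
        rcases eq_or_ne m 0 with hm | hm
        · subst hm; simp
        · rw [coeff_C, if_neg (by exact fun h => hm h.symm)]
          by_contra hne
          have hmem : m ∈ Q.support := by
            simp [MvPolynomial.mem_support_iff, hne]
          have := (totalDegree_eq_zero_iff (Fin n) Q).mp hQ0 m hmem
          exact hm (Finsupp.ext this)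
      conv_lhs => rw [hQC]
      simp
    rw [L, Finsupp.linearCombination_apply, Finsupp.sum]
    have hx0 : (∑ v ∈ x.coeff.support, x.coeff v) = 0 := hx
    calc ∑ v ∈ x.coeff.support, x.coeff v • eval (fun i => ((v i : ℚ))) Q
        = ∑ v ∈ x.coeff.support, x.coeff v • Q.coeff 0 :=
          Finset.sum_congr rfl fun v _ => by rw [hev]
      _ = (∑ v ∈ x.coeff.support, x.coeff v) • Q.coeff 0 := by rw [Finset.sum_smul]
      _ = 0 := by rw [hx0, zero_smul]
  | succ d ih =>
    rw [pow_succ'] at hx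
    refine Submodule.mul_induction_on hx ?_ ?_
    · intro a ha y hy
      have ha0 : (∑ v ∈ a.coeff.support, a.coeff v) = 0 := by
        rw [RingHom.mem_ker, eps_apply, Finsupp.sum] at ha
        exact ha
      have hay : a * y = ∑ v ∈ a.coeff.support, (a.coeff v) • (AddMonoidAlgebra.single v (1 : ℤ) * y) := by
        conv_lhs => rw [← AddMonoidAlgebra.sum_coeff_single a]
        rw [Finsupp.sum, Finset.sum_mul]
        refine Finset.sum_congr rfl fun v _ => ?_
        rw [← smul_mul_assoc, AddMonoidAlgebra.smul_single', mul_one]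
      rw [hay, AddMonoidAlgebra.coeff_sum, map_sum]
      have hz : ∀ v, L ((T v) Q - Q) y.coeff = 0 := fun v => ih ((T v) Q - Q) (deg_D v Q d hQ) y hy
      calc ∑ v ∈ a.coeff.support, L Q ((a.coeff v) • (AddMonoidAlgebra.single v (1 : ℤ) * y)).coeff
          = ∑ v ∈ a.coeff.support, (a.coeff v) • L Q y.coeff := by
            refine Finset.sum_congr rfl fun v _ => ?_
            rw [AddMonoidAlgebra.coeff_smul, map_smul, L_shift]
            have h1 := L_sub ((T v) Q) Q y
            rw [hz v] at h1
            have : L ((T v) Q) y.coeff = L Q y.coeff := by linarith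
            rw [this]
        _ = (∑ v ∈ a.coeff.support, a.coeff v) • L Q y.coeff := by rw [Finset.sum_smul]
        _ = 0 := by rw [ha0, zero_smul]
    · intro y z hy hz
      rw [AddMonoidAlgebra.coeff_add, map_add, hy, hz, add_zero]

end Aux17


/-- if `P ∈ ℚ[X₁, …, Xₙ]` has total degree at most `d` and takes integer
values on `ℤⁿ` (witnessed by `Pz`), then the `ℤ`-linear map `λ_P : ℤ[ℤⁿ] → ℤ` determined by
`[v] ↦ P(v)` vanishes on the `(d+1)`-st power of the augmentation ideal `I`; hence it
extends continuously to the `I`-adic completion `ℤ[[ℤⁿ]]` with values in `ℤ`. -/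
theorem integer_valued_polynomial_eval_vanishes_on_pow_augmentation_ideal
    (n d : ℕ) (P : MvPolynomial (Fin n) ℚ) (hP : P.totalDegree ≤ d)
    (Pz : (Fin n → ℤ) → ℤ)
    (hPz : ∀ v : Fin n → ℤ, (Pz v : ℚ) = MvPolynomial.eval (fun i => (v i : ℚ)) P)
    (x : AddMonoidAlgebra ℤ (Fin n → ℤ))
    (hx : x ∈ (RingHom.ker ((AddMonoidAlgebra.lift ℤ ℤ (Fin n → ℤ)) 1)) ^ (d + 1)) :
    Finsupp.linearCombination ℤ Pz x.coeff = 0 := by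
  have hmain := Aux17.main d P hP x hx
  have hcast : ((Finsupp.linearCombination ℤ Pz x.coeff : ℤ) : ℚ) = Aux17.L P x.coeff := by
    rw [Finsupp.linearCombination_apply, Aux17.L, Finsupp.linearCombination_apply,
      Finsupp.sum, Finsupp.sum]
    push_cast
    refine Finset.sum_congr rfl fun v _ => ?_
    rw [← hPz v]
    push_cast [zsmul_eq_mul]
    ring
  have hz : ((Finsupp.linearCombination ℤ Pz x.coeff : ℤ) : ℚ) = 0 := hcast.trans hmain
  exact_mod_cast hz
end
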